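/- Let ρ, θ > 0, u ∈ ℝ³, q ∈ ℝ³, and let f_M(ξ) = ρ (2πθ)^{−3/2} exp(−|ξ−u|²/(2θ)) be the local Maxwellian. Then for all ξ ∈ ℝ³, with v = (ξ−u)/√θ and e_i the standard basis multi-indices, the Shakhov non-equilibrium correction admits the exact Hermite expansion ((ξ−u)·q)/(5ρθ²) · (|ξ−u|²/θ − 5) · f_M(ξ) = (1/5) Σ_{i=1}^3 Σ_{j=1}^3 q_i H_{θ, e_i + 2e_j}(v). -/
import Mathlib


open MeasureTheory Real

/-- Probabilists' Hermite polynomial `He n x`, with the convention `He n ≡ 0` for `n < 0`. -/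
noncomputable def He (n : ℤ) (x : ℝ) : ℝ :=
  if n < 0 then 0 else Polynomial.aeval x (Polynomial.hermite n.toNat)

/-- The Hermite basis function
`H_{θ,α}(v) = ∏_{d=1}^3 (2π)^{−1/2} θ^{−(α_d+1)/2} He_{α_d}(v_d) e^{−v_d²/2}`. -/
noncomputable def Hb (θ : ℝ) (α : Fin 3 → ℕ) (v : Fin 3 → ℝ) : ℝ :=
  ∏ d, (2 * Real.pi) ^ (-(1 / 2 : ℝ)) * θ ^ (-(((α d : ℝ) + 1) / 2)) *
    He (α d) (v d) * Real.exp (-(v d) ^ 2 / 2)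

/-- `C_{θ,α} = (2π)^{3/2} θ^{|α|+3}/(α₁! α₂! α₃!)`. -/
noncomputable def Cc (θ : ℝ) (α : Fin 3 → ℕ) : ℝ :=
  (2 * Real.pi) ^ ((3 : ℝ) / 2) * θ ^ (α 0 + α 1 + α 2 + 3) /
    ((Nat.factorial (α 0)) * (Nat.factorial (α 1)) * (Nat.factorial (α 2)))

lemma hermite_two' : Polynomial.hermite 2 = Polynomial.X ^ 2 - Polynomial.C 1 := by
  rw [show (2:ℕ) = 1+1 from rfl, Polynomial.hermite_succ, Polynomial.hermite_one]
  simp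
  ring

lemma hermite_three' : Polynomial.hermite 3 = Polynomial.X ^ 3 - Polynomial.C 3 * Polynomial.X := by
  rw [show (3:ℕ) = 2+1 from rfl, Polynomial.hermite_succ, hermite_two']
  simp [Polynomial.derivative_X_pow]
  ring

lemma He_zero' (x : ℝ) : He 0 x = 1 := by simp [He, Polynomial.hermite_zero]
lemma He_one' (x : ℝ) : He 1 x = x := by simp [He, Polynomial.hermite_one]
lemma He_two' (x : ℝ) : He 2 x = x ^ 2 - 1 := by
  simp [He, show (2:ℤ).toNat = 2 from rfl, hermite_two']; ring
lemma He_three' (x : ℝ) : He 3 x = x ^ 3 - 3 * x := by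
  simp [He, show (3:ℤ).toNat = 3 from rfl, hermite_three']; ring

lemma rpow_half_pow {θ : ℝ} (hθ : 0 < θ) (n : ℕ) :
    θ ^ (-(((n:ℝ) + 1) / 2)) = ((Real.sqrt θ)⁻¹) ^ (n + 1) := by
  rw [Real.sqrt_eq_rpow, ← Real.rpow_neg hθ.le, ← Real.rpow_natCast (θ ^ (-(1/2):ℝ)) (n+1),
    ← Real.rpow_mul hθ.le]
  congr 1
  push_cast; ring

lemma Hb_eval {θ : ℝ} (hθ : 0 < θ) (α : Fin 3 → ℕ) (v : Fin 3 → ℝ) :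
    Hb θ α v = ((2 * Real.pi) ^ (-(1 / 2 : ℝ))) ^ 3 *
      ((Real.sqrt θ)⁻¹) ^ (α 0 + α 1 + α 2 + 3) *
      (He (α 0) (v 0) * He (α 1) (v 1) * He (α 2) (v 2)) *
      Real.exp (-(v 0 ^ 2 + v 1 ^ 2 + v 2 ^ 2) / 2) := by
  rw [Hb, Fin.prod_univ_three, rpow_half_pow hθ, rpow_half_pow hθ, rpow_half_pow hθ,
    show -(v 0 ^ 2 + v 1 ^ 2 + v 2 ^ 2) / 2
      = -(v 0) ^ 2 / 2 + (-(v 1) ^ 2 / 2 + -(v 2) ^ 2 / 2) by ring,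
    Real.exp_add, Real.exp_add]
  ring

set_option maxHeartbeats 2000000 in
/-- The Shakhov non-equilibrium correction admits the exact Hermite expansion
`((ξ−u)·q)/(5ρθ²) (|ξ−u|²/θ − 5) f_M(ξ) = (1/5) Σ_{i,j} q_i H_{θ,e_i+2e_j}((ξ−u)/√θ)`. -/
theorem shakhov_correction_expansion (ρ θ : ℝ) (hρ : 0 < ρ) (hθ : 0 < θ)
    (u q : Fin 3 → ℝ) (ξ : Fin 3 → ℝ) :
    ((∑ d, (ξ d - u d) * q d) / (5 * ρ * θ ^ 2)) *
        ((∑ d, (ξ d - u d) ^ 2) / θ - 5) *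
        (ρ * (2 * Real.pi * θ) ^ (-(3 : ℝ) / 2) *
          Real.exp (-(∑ d, (ξ d - u d) ^ 2) / (2 * θ)))
      = (1 / 5) * ∑ i : Fin 3, ∑ j : Fin 3, q i *
          Hb θ (fun d => (if d = i then 1 else 0) + (if d = j then 2 else 0))
            (fun d => (ξ d - u d) / Real.sqrt θ) := by
  obtain ⟨s, hs0, rfl⟩ : ∃ s : ℝ, 0 < s ∧ s ^ 2 = θ :=
    ⟨Real.sqrt θ, Real.sqrt_pos.mpr hθ, Real.sq_sqrt hθ.le⟩
  have hA : (2 * Real.pi * s ^ 2) ^ (-(3 : ℝ) / 2)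
      = ((2 * Real.pi) ^ (-(1 / 2 : ℝ))) ^ 3 * (s⁻¹) ^ 3 := by
    rw [Real.mul_rpow (by positivity) (by positivity)]
    congr 1
    · rw [← Real.rpow_natCast ((2 * Real.pi) ^ (-(1 / 2 : ℝ))) 3,
        ← Real.rpow_mul (by positivity)]
      norm_num
    · rw [← Real.rpow_natCast s 2, ← Real.rpow_mul hs0.le,
        show ((2:ℕ):ℝ) * (-3/2) = -((3:ℕ):ℝ) by norm_num,
        Real.rpow_neg hs0.le, Real.rpow_natCast, inv_pow]
  have hE : Real.exp (-(((ξ 0 - u 0) / s) ^ 2 + ((ξ 1 - u 1) / s) ^ 2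
        + ((ξ 2 - u 2) / s) ^ 2) / 2)
      = Real.exp (-((ξ 0 - u 0) ^ 2 + (ξ 1 - u 1) ^ 2 + (ξ 2 - u 2) ^ 2) / (2 * s ^ 2)) := by
    congr 1
    ring
  simp only [Fin.sum_univ_three, Hb_eval hθ, Real.sqrt_sq hs0.le, hA, hE,
    show ((0:Fin 3) = 0) = True from eq_true rfl,
    show ((1:Fin 3) = 1) = True from eq_true rfl,
    show ((2:Fin 3) = 2) = True from eq_true rfl,
    show ((0:Fin 3) = 1) = False from eq_false (by decide),
    show ((0:Fin 3) = 2) = False from eq_false (by decide),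
    show ((1:Fin 3) = 0) = False from eq_false (by decide),
    show ((1:Fin 3) = 2) = False from eq_false (by decide),
    show ((2:Fin 3) = 0) = False from eq_false (by decide),
    show ((2:Fin 3) = 1) = False from eq_false (by decide),
    if_true, if_false, Nat.reduceAdd, Nat.cast_ofNat, Nat.cast_one, Nat.cast_zero,
    He_zero', He_one', He_two', He_three']
  set E := Real.exp (-((ξ 0 - u 0) ^ 2 + (ξ 1 - u 1) ^ 2 + (ξ 2 - u 2) ^ 2) / (2 * s ^ 2)) with hEdef
  set a := (2 * Real.pi) ^ (-(1 / 2 : ℝ)) with hadef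
  rw [inv_pow, inv_pow, ← Real.sqrt_sq hs0.le]
  rw [Real.sqrt_sq hs0.le]
  field_simp
  ring
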